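/- Let H be a complex Hilbert space, (X, ν) a measure space, and ψ : X → H a total family (its closed linear span is H) such that x ↦ ⟨ψ_x, f⟩ is ν-measurable for every f ∈ H, with analysis operator C defined on Dom(C) = {f ∈ H : x ↦ ⟨ψ_x, f⟩ ∈ L²(X, ν)} by (C f)(x) = ⟨ψ_x, f⟩. Then ψ satisfies the lower frame condition — there exists m > 0 such that m‖f‖² ≤ ∫_X |⟨ψ_x, f⟩|² dν(x) (as a value in [0, ∞]) for all f ∈ H — if and only if C is injective and has closed range in L²(X, ν). -/

import Mathlib

set_option synthInstance.maxHeartbeats 1000000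
set_option maxHeartbeats 2000000

open MeasureTheory Filter
open scoped ComplexInnerProductSpace ENNReal

section Aux

variable {X : Type*} [MeasurableSpace X] {ν : Measure X}

lemma sq_eLpNorm' (f : X → ℂ) :
    eLpNorm f 2 ν ^ 2 = ∫⁻ x, (‖f x‖₊ : ℝ≥0∞) ^ 2 ∂ν := by
  rw [eLpNorm_eq_lintegral_rpow_enorm_toReal two_ne_zero ENNReal.ofNat_ne_top]
  rw [← ENNReal.rpow_natCast _ 2, ← ENNReal.rpow_mul]
  norm_num
  rfl

lemma memLp_iff_lint' {f : X → ℂ} (hf : AEStronglyMeasurable f ν) :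
    MemLp f 2 ν ↔ ∫⁻ x, (‖f x‖₊ : ℝ≥0∞) ^ 2 ∂ν < ∞ := by
  rw [MemLp, ← sq_eLpNorm']
  constructor
  · rintro ⟨-, h⟩; exact ENNReal.pow_lt_top h
  · intro h
    refine ⟨hf, ?_⟩
    by_contra hc
    rw [not_lt, top_le_iff] at hc
    rw [hc] at h
    exact absurd h (by simp)

lemma lint_eq_ofReal_norm' {f : X → ℂ} (hf : MemLp f 2 ν) :
    ∫⁻ x, (‖f x‖₊ : ℝ≥0∞) ^ 2 ∂ν = ENNReal.ofReal (‖hf.toLp f‖ ^ 2) := by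
  rw [← sq_eLpNorm', Lp.norm_toLp, ENNReal.ofReal_pow ENNReal.toReal_nonneg,
    ENNReal.ofReal_toReal hf.2.ne]

lemma key_limit' {H : Type*} [NormedAddCommGroup H] [InnerProductSpace ℂ H]
    (ψ : X → H) (f : ℕ → H) (f₀ : H)
    (hf : ∀ n, MemLp (fun x => ⟪ψ x, f n⟫) 2 ν)
    (F : Lp ℂ 2 ν)
    (hFlim : Tendsto (fun n => (hf n).toLp (fun x => ⟪ψ x, f n⟫)) atTop (nhds F))
    (hflim : Tendsto f atTop (nhds f₀)) :
    (fun x => ⟪ψ x, f₀⟫) =ᵐ[ν] F := by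
  have h1 : Tendsto (fun n => eLpNorm ((fun x => ⟪ψ x, f n⟫) - ⇑F) 2 ν) atTop (nhds 0) := by
    have := (Lp.tendsto_Lp_iff_tendsto_eLpNorm' (fun n => (hf n).toLp (fun x => ⟪ψ x, f n⟫)) F).mp hFlim
    refine this.congr fun n => ?_
    exact eLpNorm_congr_ae (((hf n).coeFn_toLp).sub (EventuallyEq.refl _ _))
  have h2 : TendstoInMeasure ν (fun n x => ⟪ψ x, f n⟫) atTop ⇑F :=
    tendstoInMeasure_of_tendsto_eLpNorm two_ne_zero (fun n => (hf n).1)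
      (Lp.aestronglyMeasurable F) h1
  obtain ⟨ns, hns, hae⟩ := h2.exists_seq_tendsto_ae
  filter_upwards [hae] with x hx
  have h3 : Tendsto (fun k => ⟪ψ x, f (ns k)⟫) atTop (nhds ⟪ψ x, f₀⟫) :=
    (Tendsto.inner tendsto_const_nhds hflim).comp hns.tendsto_atTop
  exact tendsto_nhds_unique h3 hx

end Aux


section Graph

variable {H : Type*} [NormedAddCommGroup H] [InnerProductSpace ℂ H]
  {X : Type*} [MeasurableSpace X]

/-- The graph of the analysis operator, as a submodule of `H × L²`. -/
noncomputable def grSub (ψ : X → H) (ν : Measure X) : Submodule ℂ (H × Lp ℂ 2 ν) where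
  carrier := {p | ⇑p.2 =ᵐ[ν] fun x => ⟪ψ x, p.1⟫}
  add_mem' := by
    intro p q hp hq
    show ⇑(p.2 + q.2) =ᵐ[ν] fun x => ⟪ψ x, p.1 + q.1⟫
    filter_upwards [Lp.coeFn_add p.2 q.2, hp, hq] with x hx hxa hxb
    rw [hx]
    simp only [Pi.add_apply, hxa, hxb, inner_add_right]
  zero_mem' := by
    show ⇑(0 : Lp ℂ 2 ν) =ᵐ[ν] fun x => ⟪ψ x, (0 : H)⟫
    filter_upwards [Lp.coeFn_zero ℂ 2 ν] with x hx
    rw [hx]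
    simp
  smul_mem' := by
    intro c p hp
    show ⇑(c • p.2) =ᵐ[ν] fun x => ⟪ψ x, c • p.1⟫
    filter_upwards [Lp.coeFn_smul c p.2, hp] with x hx hxa
    rw [hx]
    simp only [Pi.smul_apply, hxa, inner_smul_right, smul_eq_mul]

lemma mem_grSub {ψ : X → H} {ν : Measure X} {p : H × Lp ℂ 2 ν} :
    p ∈ grSub ψ ν ↔ ⇑p.2 =ᵐ[ν] fun x => ⟪ψ x, p.1⟫ := Iff.rfl

/-- Second projection restricted to the graph. -/
noncomputable def grSnd (ψ : X → H) (ν : Measure X) : (grSub ψ ν) →L[ℂ] Lp ℂ 2 ν :=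
  (ContinuousLinearMap.snd ℂ H (Lp ℂ 2 ν)).comp (grSub ψ ν).subtypeL

/-- The range of the analysis operator. -/
noncomputable def anaRange (ψ : X → H) (ν : Measure X) : Submodule ℂ (Lp ℂ 2 ν) :=
  LinearMap.range (grSnd ψ ν : (grSub ψ ν) →ₗ[ℂ] Lp ℂ 2 ν)

/-- The second projection corestricted to the range. -/
noncomputable def grToRange (ψ : X → H) (ν : Measure X) : (grSub ψ ν) →L[ℂ] anaRange ψ ν :=
  (grSnd ψ ν).codRestrict _ (fun x => LinearMap.mem_range_self _ x)

lemma grToRange_coe {ψ : X → H} {ν : Measure X} (g : grSub ψ ν) :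
    ((grToRange ψ ν g : anaRange ψ ν) : Lp ℂ 2 ν) = ((g : H × Lp ℂ 2 ν)).2 := rfl

/-- The analysis operator as a continuous equivalence from its graph to its range. -/
noncomputable def anaEquiv (ψ : X → H) (ν : Measure X)
    [CompleteSpace (grSub ψ ν)] [CompleteSpace (anaRange ψ ν)]
    (hker : LinearMap.ker (grToRange ψ ν : (grSub ψ ν) →ₗ[ℂ] anaRange ψ ν) = ⊥)
    (hrange : LinearMap.range (grToRange ψ ν : (grSub ψ ν) →ₗ[ℂ] anaRange ψ ν) = ⊤) :
    (grSub ψ ν) ≃L[ℂ] (anaRange ψ ν) :=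
  ContinuousLinearEquiv.ofBijective (grToRange ψ ν) hker hrange

lemma grBound {ψ : X → H} {ν : Measure X}
    [CompleteSpace (grSub ψ ν)] [CompleteSpace (anaRange ψ ν)]
    (hker : LinearMap.ker (grToRange ψ ν : (grSub ψ ν) →ₗ[ℂ] anaRange ψ ν) = ⊥)
    (hrange : LinearMap.range (grToRange ψ ν : (grSub ψ ν) →ₗ[ℂ] anaRange ψ ν) = ⊤) :
    ∃ K : ℝ, 0 ≤ K ∧ ∀ g : grSub ψ ν,
      ‖g‖ ≤ K * ‖((grToRange ψ ν) g : Lp ℂ 2 ν)‖ := by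
  set e := anaEquiv ψ ν hker hrange with he
  refine ⟨‖(e.symm : (anaRange ψ ν) →L[ℂ] (grSub ψ ν))‖, ContinuousLinearMap.opNorm_nonneg _, fun g => ?_⟩
  have hcoe : (e : (grSub ψ ν) →L[ℂ] (anaRange ψ ν)) = grToRange ψ ν := by
    rw [he, anaEquiv]
    exact ContinuousLinearEquiv.coe_ofBijective _ hker hrange
  have heg : e g = grToRange ψ ν g := by rw [← hcoe]; rfl
  have h1 : e.symm (grToRange ψ ν g) = g := by rw [← heg]; exact e.symm_apply_apply g
  calc ‖g‖ = ‖e.symm (grToRange ψ ν g)‖ := by rw [h1]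
    _ = ‖(e.symm : (anaRange ψ ν) →L[ℂ] (grSub ψ ν)) (grToRange ψ ν g)‖ := rfl
    _ ≤ _ * ‖grToRange ψ ν g‖ :=
        (e.symm : (anaRange ψ ν) →L[ℂ] (grSub ψ ν)).le_opNorm (grToRange ψ ν g)
    _ = _ * ‖(grToRange ψ ν g : Lp ℂ 2 ν)‖ := rfl

end Graph

set_option maxHeartbeats 1000000 in
set_option synthInstance.maxHeartbeats 200000 in
/-- For a total family `ψ : X → H` with measurable coefficient functions,
the lower frame condition holds if and only if the analysis operator `C`
(with domain `{f | (fun x => ⟪ψ x, f⟫) ∈ L²(X, ν)}`) is injective and has closed range. -/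
theorem lower_frame_condition_iff_injective_closed_range
    {H : Type*} [NormedAddCommGroup H] [InnerProductSpace ℂ H] [CompleteSpace H]
    {X : Type*} [MeasurableSpace X] (ν : Measure X)
    (ψ : X → H)
    (hmeas : ∀ f : H, AEMeasurable (fun x => ⟪ψ x, f⟫) ν)
    (htotal : (Submodule.span ℂ (Set.range ψ)).topologicalClosure = ⊤) :
    (∃ m : ℝ, 0 < m ∧ ∀ f : H,
        ENNReal.ofReal (m * ‖f‖ ^ 2) ≤ ∫⁻ x, (‖⟪ψ x, f⟫‖₊ : ℝ≥0∞) ^ 2 ∂ν) ↔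
      ((∀ f g : H, MemLp (fun x => ⟪ψ x, f⟫) 2 ν → MemLp (fun x => ⟪ψ x, g⟫) 2 ν →
          (fun x => ⟪ψ x, f⟫) =ᵐ[ν] (fun x => ⟪ψ x, g⟫) → f = g) ∧
        IsClosed {F : Lp ℂ 2 ν |
          ∃ (f : H) (hf : MemLp (fun x => ⟪ψ x, f⟫) 2 ν),
            F = hf.toLp (fun x => ⟪ψ x, f⟫)}) := by
  have hsubfun : ∀ a b : H, (fun x => ⟪ψ x, a - b⟫) =
      (fun x => ⟪ψ x, a⟫) - (fun x => ⟪ψ x, b⟫) := by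
    intro a b; funext x; simp [inner_sub_right]
  have hzerofun : (fun x => ⟪ψ x, (0 : H)⟫) = (0 : X → ℂ) := by
    funext x; simp
  constructor
  · rintro ⟨m, hm, hb⟩
    -- key quantitative estimate
    have hm2 : ∀ (a b : H) (ha : MemLp (fun x => ⟪ψ x, a⟫) 2 ν)
        (hb' : MemLp (fun x => ⟪ψ x, b⟫) 2 ν),
        m * ‖a - b‖ ^ 2 ≤ ‖ha.toLp _ - hb'.toLp _‖ ^ 2 := by
      intro a b ha hb'
      have hs : MemLp (fun x => ⟪ψ x, a - b⟫) 2 ν := by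
        rw [hsubfun a b]; exact ha.sub hb'
      have h1 := hb (a - b)
      rw [lint_eq_ofReal_norm' hs] at h1
      have h2 : hs.toLp _ = ha.toLp _ - hb'.toLp _ := by
        simp only [hsubfun a b]
        exact MemLp.toLp_sub ha hb'
      rw [h2] at h1
      exact (ENNReal.ofReal_le_ofReal_iff (by positivity)).mp h1
    constructor
    · intro f g hf hg heq
      have h0 : (fun x => ⟪ψ x, f - g⟫) =ᵐ[ν] (0 : X → ℂ) := by
        rw [hsubfun f g]
        filter_upwards [heq] with x hx
        simp [Pi.sub_apply, sub_eq_zero.mpr hx]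
      have h0' : (fun x => (‖⟪ψ x, f - g⟫‖₊ : ℝ≥0∞) ^ 2) =ᵐ[ν] (fun _ => 0) := by
        filter_upwards [h0] with x hx
        have hx' : (⟪ψ x, f - g⟫ : ℂ) = 0 := hx
        simp [hx']
      have hz : ∫⁻ x, (‖⟪ψ x, f - g⟫‖₊ : ℝ≥0∞) ^ 2 ∂ν = 0 := by
        rw [lintegral_congr_ae h0', lintegral_zero]
      have := hb (f - g)
      rw [hz, le_zero_iff, ENNReal.ofReal_eq_zero] at this
      have h4 : ‖f - g‖ ^ 2 = 0 := le_antisymm (by nlinarith) (by positivity)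
      have hn : ‖f - g‖ = 0 := sq_eq_zero_iff.mp h4
      rw [norm_eq_zero, sub_eq_zero] at hn
      exact hn
    · refine IsSeqClosed.isClosed ?_
      intro F L hF hlim
      choose f hf hFe using hF
      have hcf : CauchySeq f := by
        have hc : CauchySeq F := hlim.cauchySeq
        rw [Metric.cauchySeq_iff'] at hc ⊢
        intro ε hε
        obtain ⟨N, hN⟩ := hc (Real.sqrt m * ε) (by positivity)
        refine ⟨N, fun n hn => ?_⟩
        have h1 := hm2 (f n) (f N) (hf n) (hf N)
        rw [← hFe n, ← hFe N] at h1
        have h2 : dist (F n) (F N) < Real.sqrt m * ε := hN n hn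
        rw [dist_eq_norm] at h2 ⊢
        have hsq : Real.sqrt m ^ 2 = m := Real.sq_sqrt hm.le
        have hD0 : (0:ℝ) ≤ ‖F n - F N‖ := norm_nonneg _
        have h3 : ‖F n - F N‖ ^ 2 < (Real.sqrt m * ε) ^ 2 := by nlinarith
        by_contra hcon
        push_neg at hcon
        have h4 : ε ^ 2 ≤ ‖f n - f N‖ ^ 2 := by nlinarith
        have h5 := mul_le_mul_of_nonneg_left h4 hm.le
        nlinarith
      obtain ⟨f₀, hf₀⟩ := cauchySeq_tendsto_of_complete hcf
      have hFlim : Tendsto (fun n => (hf n).toLp (fun x => ⟪ψ x, f n⟫)) atTop (nhds L) := by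
        have : (fun n => (hf n).toLp (fun x => ⟪ψ x, f n⟫)) = F :=
          funext fun n => (hFe n).symm
        rw [this]; exact hlim
      have haeq := key_limit' ψ f f₀ hf L hFlim hf₀
      have hmem : MemLp (fun x => ⟪ψ x, f₀⟫) 2 ν := MemLp.ae_eq haeq.symm (Lp.memLp L)
      refine ⟨f₀, hmem, ?_⟩
      have h3 : hmem.toLp _ = (Lp.memLp L).toLp ⇑L :=
        (MemLp.toLp_eq_toLp_iff _ _).mpr haeq
      rw [Lp.toLp_coeFn] at h3
      exact h3.symm
  · rintro ⟨hinj, hclosed⟩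
    have hGc : IsClosed ((grSub ψ ν : Submodule ℂ (H × Lp ℂ 2 ν)) : Set (H × Lp ℂ 2 ν)) := by
      refine IsSeqClosed.isClosed ?_
      intro p p₀ hp hplim
      have hp' : ∀ n, ⇑(p n).2 =ᵐ[ν] fun x => ⟪ψ x, (p n).1⟫ := fun n => hp n
      have h1 : Tendsto (fun n => (p n).1) atTop (nhds p₀.1) :=
        (continuous_fst.tendsto p₀).comp hplim
      have h2 : Tendsto (fun n => (p n).2) atTop (nhds p₀.2) :=
        (continuous_snd.tendsto p₀).comp hplim
      have hmem : ∀ n, MemLp (fun x => ⟪ψ x, (p n).1⟫) 2 ν :=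
        fun n => MemLp.ae_eq (hp' n) (Lp.memLp (p n).2)
      have htl : ∀ n, (hmem n).toLp (fun x => ⟪ψ x, (p n).1⟫) = (p n).2 := by
        intro n
        have := (MemLp.toLp_eq_toLp_iff (hmem n) (Lp.memLp (p n).2)).mpr (hp' n).symm
        rwa [Lp.toLp_coeFn] at this
      have hFlim : Tendsto (fun n => (hmem n).toLp (fun x => ⟪ψ x, (p n).1⟫))
          atTop (nhds p₀.2) := by
        simpa only [htl] using h2
      exact mem_grSub.mpr
        (key_limit' ψ (fun n => (p n).1) p₀.1 hmem p₀.2 hFlim h1).symm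
    haveI : CompleteSpace (grSub ψ ν) := hGc.completeSpace_coe
    have hRS : ((anaRange ψ ν : Submodule ℂ (Lp ℂ 2 ν)) : Set (Lp ℂ 2 ν)) = {F : Lp ℂ 2 ν |
        ∃ (f : H) (hf : MemLp (fun x => ⟪ψ x, f⟫) 2 ν),
          F = hf.toLp (fun x => ⟪ψ x, f⟫)} := by
      ext F
      constructor
      · rintro ⟨⟨⟨a, Fa⟩, hab⟩, rfl⟩
        have hab' : ⇑Fa =ᵐ[ν] fun x => ⟪ψ x, a⟫ := hab
        have hmem : MemLp (fun x => ⟪ψ x, a⟫) 2 ν := MemLp.ae_eq hab' (Lp.memLp Fa)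
        refine ⟨a, hmem, ?_⟩
        have := (MemLp.toLp_eq_toLp_iff hmem (Lp.memLp Fa)).mpr hab'.symm
        rw [Lp.toLp_coeFn] at this
        exact this.symm
      · rintro ⟨a, ha, rfl⟩
        exact ⟨⟨(a, ha.toLp _), mem_grSub.mpr ha.coeFn_toLp⟩, rfl⟩
    have hRc : IsClosed ((anaRange ψ ν : Submodule ℂ (Lp ℂ 2 ν)) : Set (Lp ℂ 2 ν)) :=
      hRS ▸ hclosed
    haveI : CompleteSpace (anaRange ψ ν) := hRc.completeSpace_coe
    have hker : LinearMap.ker (grToRange ψ ν : (grSub ψ ν) →ₗ[ℂ] anaRange ψ ν) = ⊥ := by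
      rw [LinearMap.ker_eq_bot']
      rintro ⟨⟨a, Fa⟩, hab⟩ hTz
      have hab' : ⇑Fa =ᵐ[ν] fun x => ⟪ψ x, a⟫ := hab
      have hFa : Fa = 0 := congrArg Subtype.val hTz
      have hae : (fun x => ⟪ψ x, a⟫) =ᵐ[ν] (fun x => ⟪ψ x, (0 : H)⟫) := by
        rw [hzerofun]
        refine (hab'.symm.trans ?_)
        rw [hFa]
        exact Lp.coeFn_zero ℂ 2 ν
      have hma : MemLp (fun x => ⟪ψ x, a⟫) 2 ν := MemLp.ae_eq hab' (Lp.memLp Fa)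
      have hmz : MemLp (fun x => ⟪ψ x, (0 : H)⟫) 2 ν := by rw [hzerofun]; exact MemLp.zero
      have ha0 : a = 0 := hinj a 0 hma hmz hae
      exact Subtype.ext (Prod.ext ha0 hFa)
    have hrange : LinearMap.range (grToRange ψ ν : (grSub ψ ν) →ₗ[ℂ] anaRange ψ ν) = ⊤ := by
      rw [Submodule.eq_top_iff']
      rintro ⟨F, hF⟩
      obtain ⟨g, hg⟩ := hF
      exact ⟨g, Subtype.ext hg⟩
    obtain ⟨K, hK0, hbound⟩ := grBound hker hrange
    refine ⟨1 / (K + 1) ^ 2, by positivity, fun f => ?_⟩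
    by_cases hf : MemLp (fun x => ⟪ψ x, f⟫) 2 ν
    · have hmemG : (f, hf.toLp (fun x => ⟪ψ x, f⟫)) ∈ grSub ψ ν :=
        mem_grSub.mpr hf.coeFn_toLp
      set g : grSub ψ ν := ⟨(f, hf.toLp _), hmemG⟩ with hg
      have hTg : (grToRange ψ ν g : Lp ℂ 2 ν) = hf.toLp (fun x => ⟪ψ x, f⟫) :=
        grToRange_coe g
      have hfle : ‖f‖ ≤ K * ‖hf.toLp (fun x => ⟪ψ x, f⟫)‖ := by
        have h1 : ‖f‖ ≤ ‖g‖ :=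
          norm_fst_le ((f, hf.toLp (fun x => ⟪ψ x, f⟫)) : H × Lp ℂ 2 ν)
        calc ‖f‖ ≤ ‖g‖ := h1
          _ ≤ K * ‖(grToRange ψ ν g : Lp ℂ 2 ν)‖ := hbound g
          _ = K * ‖hf.toLp (fun x => ⟪ψ x, f⟫)‖ := by rw [hTg]
      rw [lint_eq_ofReal_norm' hf]
      apply ENNReal.ofReal_le_ofReal
      set t : ℝ := ‖hf.toLp (fun x => ⟪ψ x, f⟫)‖ with ht
      have ht0 : 0 ≤ t := norm_nonneg _
      have h2 : ‖f‖ ^ 2 ≤ ((K + 1) * t) ^ 2 := by nlinarith [norm_nonneg f]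
      have h3 : (K + 1) ^ 2 > 0 := by positivity
      rw [div_mul_eq_mul_div, one_mul, div_le_iff₀ h3]
      nlinarith
    · have htop : ∫⁻ x, (‖⟪ψ x, f⟫‖₊ : ℝ≥0∞) ^ 2 ∂ν = ⊤ := by
        by_contra h
        exact hf ((memLp_iff_lint' (hmeas f).aestronglyMeasurable).mpr
          (lt_top_iff_ne_top.mpr h))
      rw [htop]
      exact le_top
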